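/- With leaders chosen as above, the subgraph of G_u induced on the leader set L_c together with the within-sub-cube adjacencies makes L_c a connected dominating structure: any two leaders of the same cluster c are connected by a path in G_u all of whose intermediate hops go between points at distance at most R_min and pass only through leaders of c. -/

import Mathlib

/-- Membership of `x` in the sub-cube indexed by `k : Fin d → Fin d` of the cube of
side `R` with lowest corner `a`, partitioned into `d^d` sub-cubes of side `R/d`. -/
def inSubcube {d : ℕ} (a : EuclideanSpace ℝ (Fin d)) (R : ℝ) (k : Fin d → Fin d)
    (x : EuclideanSpace ℝ (Fin d)) : Prop :=
  ∀ i, a i + ((k i : ℕ) : ℝ) * (R / d) ≤ x i ∧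
    x i ≤ a i + (((k i : ℕ) : ℝ) + 1) * (R / d)

/-- With leaders chosen as in the construction (for every pair of sub-cubes joined
by an edge of `G_u[c]`, the leader set contains the two endpoints of such an edge,
lying in those sub-cubes and at distance at most `R_min`), the leader set `L` of a
cluster `c` is connected: any two leaders of `c` are joined by a path all of whose
hops go between leaders of `c` at distance at most `R_min`. -/
lemma subcube_exists {d : ℕ} (hd : 1 ≤ d) (Rmin : ℝ) (hR : 0 < Rmin)
    (a x : EuclideanSpace ℝ (Fin d)) (hx : ∀ i, a i ≤ x i ∧ x i ≤ a i + Rmin) :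
    ∃ k, inSubcube a Rmin k x := by
  have hdpos : (0:ℝ) < d := by exact_mod_cast hd
  have hs : (0:ℝ) < Rmin / d := div_pos hR hdpos
  set s := Rmin / d with hsdef
  have hds : (d:ℝ) * s = Rmin := by rw [hsdef]; field_simp
  refine ⟨fun i => ⟨min ⌊(x i - a i)/s⌋₊ (d-1), ?_⟩, fun i => ?_⟩
  · exact lt_of_le_of_lt (min_le_right _ _) (Nat.sub_lt (by omega) one_pos)
  · simp only [Fin.val_mk]
    set t := (x i - a i)/s with htdef
    have ht0 : 0 ≤ t := div_nonneg (by linarith [(hx i).1]) hs.le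
    have hts : t * s = x i - a i := div_mul_cancel₀ _ hs.ne'
    constructor
    · have h1 : ((min ⌊t⌋₊ (d-1) : ℕ) : ℝ) ≤ t :=
        le_trans (by exact_mod_cast Nat.cast_le.mpr (min_le_left _ _)) (Nat.floor_le ht0)
      nlinarith
    · rcases le_or_gt ⌊t⌋₊ (d-1) with h | h
      · rw [min_eq_left h]
        have h2 : t ≤ (⌊t⌋₊ : ℝ) + 1 := (Nat.lt_floor_add_one t).le
        nlinarith
      · rw [min_eq_right h.le]
        have hd1 : ((d - 1 : ℕ) : ℝ) + 1 = d := by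
          have : (d - 1 : ℕ) + 1 = d := by omega
          exact_mod_cast this
        rw [hd1]
        have h3 : x i ≤ a i + Rmin := (hx i).2
        nlinarith

lemma same_subcube_dist {d : ℕ} (hd : 1 ≤ d) (Rmin : ℝ) (hR : 0 < Rmin)
    (a : EuclideanSpace ℝ (Fin d)) (k : Fin d → Fin d)
    (x y : EuclideanSpace ℝ (Fin d))
    (hx : inSubcube a Rmin k x) (hy : inSubcube a Rmin k y) :
    dist x y ≤ Rmin := by
  have hdpos : (0:ℝ) < d := by exact_mod_cast hd
  have hd1 : (1:ℝ) ≤ d := by exact_mod_cast hd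
  set s := Rmin / d with hsdef
  have hs : (0:ℝ) < s := div_pos hR hdpos
  have hds : (d:ℝ) * s = Rmin := by rw [hsdef]; field_simp
  have hcoord : ∀ i, dist (x i) (y i)^2 ≤ s^2 := by
    intro i
    have h1 := hx i; have h2 := hy i
    rw [Real.dist_eq, sq_abs]
    nlinarith [h1.1, h1.2, h2.1, h2.2]
  have hsum : ∑ i, dist (x i) (y i)^2 ≤ Rmin^2 := by
    calc ∑ i, dist (x i) (y i)^2 ≤ ∑ _i : Fin d, s^2 :=
          Finset.sum_le_sum fun i _ => hcoord i
      _ = d * s^2 := by simp [mul_comm]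
      _ ≤ Rmin ^ 2 := by nlinarith [hs.le, hR.le]
  rw [EuclideanSpace.dist_eq]
  exact (Real.sqrt_le_sqrt hsum).trans_eq (Real.sqrt_sq hR.le)

theorem leaders_connected (d : ℕ) (hd : 1 ≤ d) (Rmin : ℝ) (hR : 0 < Rmin)
    (a : EuclideanSpace ℝ (Fin d))
    (S SB : Finset (EuclideanSpace ℝ (Fin d)))
    -- `SB` is the set of points of `S` inside the bucket `B`
    (hSB : ∀ x, x ∈ SB ↔ x ∈ S ∧ ∀ i, a i ≤ x i ∧ x i ≤ a i + Rmin)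
    (c : Finset (EuclideanSpace ℝ (Fin d)))
    -- `c` is a connected component of `G_u` restricted to `SB`
    (hc : ∃ x₀ ∈ SB, ∀ y, y ∈ c ↔ y ∈ SB ∧
      Relation.ReflTransGen
        (fun u v => u ∈ SB ∧ v ∈ SB ∧ u ≠ v ∧ dist u v ≤ Rmin) x₀ y)
    (L : Finset (EuclideanSpace ℝ (Fin d))) (hLc : L ⊆ c)
    -- construction of the leaders: for each pair of sub-cubes joined by an edge of
    -- `G_u[c]`, `L` contains the endpoints of one such edge
    (hL : ∀ k₁ k₂ : Fin d → Fin d,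
      (∃ u ∈ c, ∃ v ∈ c, u ≠ v ∧ dist u v ≤ Rmin ∧
        inSubcube a Rmin k₁ u ∧ inSubcube a Rmin k₂ v) →
      ∃ u' ∈ L, ∃ v' ∈ L, inSubcube a Rmin k₁ u' ∧ inSubcube a Rmin k₂ v' ∧
        dist u' v' ≤ Rmin) :
    ∀ ℓ ∈ L, ∀ ℓ' ∈ L,
      Relation.ReflTransGen
        (fun u v => u ∈ L ∧ v ∈ L ∧ dist u v ≤ Rmin) ℓ ℓ' := by
  classical
  obtain ⟨x₀, hx₀, hchar⟩ := hc
  set rel : EuclideanSpace ℝ (Fin d) → EuclideanSpace ℝ (Fin d) → Prop :=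
    fun u v => u ∈ SB ∧ v ∈ SB ∧ u ≠ v ∧ dist u v ≤ Rmin with hrel
  set Rl : EuclideanSpace ℝ (Fin d) → EuclideanSpace ℝ (Fin d) → Prop :=
    fun u v => u ∈ L ∧ v ∈ L ∧ dist u v ≤ Rmin with hRl
  -- choose a subcube for every point of SB
  have hKex : ∀ x : EuclideanSpace ℝ (Fin d), ∃ k, x ∈ SB → inSubcube a Rmin k x := by
    intro x
    by_cases hx : x ∈ SB
    · obtain ⟨k, hk⟩ := subcube_exists hd Rmin hR a x ((hSB x).mp hx).2
      exact ⟨k, fun _ => hk⟩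
    · exact ⟨fun _ => ⟨0, by omega⟩, fun h => absurd h hx⟩
  choose K hK using hKex
  -- key induction
  have key : ∀ x, x ∈ c → ∀ y, Relation.ReflTransGen rel x y →
      y ∈ c ∧ ∀ p ∈ L, ∀ q ∈ L, inSubcube a Rmin (K x) p → inSubcube a Rmin (K y) q →
        Relation.ReflTransGen Rl p q := by
    intro x hx y h
    induction h with
    | refl =>
        refine ⟨hx, fun p hp q hq hkp hkq => Relation.ReflTransGen.single ?_⟩
        exact ⟨hp, hq, same_subcube_dist hd Rmin hR a (K x) p q hkp hkq⟩
    | tail hxy hyz ih =>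
        rename_i y z
        obtain ⟨hyc, ihpq⟩ := ih
        have hzc : z ∈ c := by
          rw [hchar]
          refine ⟨hyz.2.1, ?_⟩
          exact (((hchar x).mp hx).2.trans hxy).tail hyz
        refine ⟨hzc, fun p hp q hq hkp hkq => ?_⟩
        obtain ⟨u', hu', v', hv', hku', hkv', hduv⟩ :=
          hL (K y) (K z) ⟨y, hyc, z, hzc, hyz.2.2.1, hyz.2.2.2,
            hK y hyz.1, hK z hyz.2.1⟩
        have h1 : Relation.ReflTransGen Rl p u' := ihpq p hp u' hu' hkp hku'
        have h2 : Relation.ReflTransGen Rl u' v' :=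
          Relation.ReflTransGen.single ⟨hu', hv', hduv⟩
        have h3 : Relation.ReflTransGen Rl v' q :=
          Relation.ReflTransGen.single
            ⟨hv', hq, same_subcube_dist hd Rmin hR a (K z) v' q hkv' hkq⟩
        exact (h1.trans h2).trans h3
  intro ℓ hℓ ℓ' hℓ'
  have hℓc : ℓ ∈ c := hLc hℓ
  have hℓ'c : ℓ' ∈ c := hLc hℓ'
  have hsymm : Symmetric rel := fun u v h =>
    ⟨h.2.1, h.1, h.2.2.1.symm, by rw [dist_comm]; exact h.2.2.2⟩
  have hchain : Relation.ReflTransGen rel ℓ ℓ' :=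
    ((@Relation.ReflTransGen.stdSymm _ _ ⟨hsymm⟩).symm _ _ ((hchar ℓ).mp hℓc).2).trans
      ((hchar ℓ').mp hℓ'c).2
  exact (key ℓ hℓc ℓ' hchain).2 ℓ hℓ ℓ' hℓ'
    (hK ℓ ((hchar ℓ).mp hℓc).1) (hK ℓ' ((hchar ℓ').mp hℓ'c).1)
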